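/- arXiv:1603.08077 — 3 statements merged into one kernel-verified Lean document; each statement's English description precedes it below -/
import Mathlib

section
/- Let $g \ge 2$ and $N \ge 1$ be integers, let $g' \ge 0$ and $k \ge 0$ be integers with $g' \ge 1$ or $k \ge 4$, and let $q_1, \dots, q_k$ be integers with each $q_i \ge 2$. If $2 - 2g = N\bigl(2 - 2g' - \sum_{i=1}^{k}(1 - 1/q_i)\bigr)$ (as an equality of rational numbers), then $N \le 12(g-1)$. -/
/-- Riemann–Hurwitz bound: if `2 - 2g = N (2 - 2g' - ∑ (1 - 1/qᵢ))` with `g ≥ 2`,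
`N ≥ 1`, each `qᵢ ≥ 2`, and `g' ≥ 1` or `k ≥ 4`, then `N ≤ 12(g-1)`. -/
theorem riemann_hurwitz_order_bound
    (g N : ℤ) (hg : 2 ≤ g) (hN : 1 ≤ N)
    (g' k : ℕ) (hg'k : 1 ≤ g' ∨ 4 ≤ k)
    (q : Fin k → ℤ) (hq : ∀ i, 2 ≤ q i)
    (hRH : (2 - 2 * g : ℚ) =
      N * (2 - 2 * g' - ∑ i, (1 - 1 / (q i : ℚ)))) :
    N ≤ 12 * (g - 1) := by
  set S : ℚ := ∑ i, (1 - 1 / (q i : ℚ)) with hS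
  have hterm : ∀ i, (1/2 : ℚ) ≤ 1 - 1 / (q i : ℚ) := by
    intro i
    have h2 : (2:ℚ) ≤ (q i : ℚ) := by exact_mod_cast hq i
    have hpos : (0:ℚ) < (q i : ℚ) := by linarith
    have : 1 / (q i : ℚ) ≤ 1/2 := by
      rw [div_le_div_iff₀ hpos (by norm_num)]; linarith
    linarith
  have hSk : (k : ℚ) * (1/2) ≤ S := by
    have h := Finset.card_nsmul_le_sum Finset.univ (fun i => 1 - 1/(q i:ℚ)) (1/2)
      (fun i _ => hterm i)
    rw [Finset.card_univ, Fintype.card_fin, nsmul_eq_mul] at h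
    exact h
  set D : ℚ := S + 2*(g':ℚ) - 2 with hDdef
  have hGQ : (2:ℚ) ≤ (g:ℚ) := by exact_mod_cast hg
  have hNQ : (1:ℚ) ≤ (N:ℚ) := by exact_mod_cast hN
  have hD : (2*(g:ℚ) - 2) = (N:ℚ) * D := by
    have hr : (N:ℚ) * (2 - 2*(g':ℚ) - S) = -((N:ℚ) * D) := by rw [hDdef]; ring
    linarith [hRH, hr]
  have hDpos : 0 < D := by
    by_contra h
    push_neg at h
    have : (N:ℚ) * D ≤ 0 := mul_nonpos_of_nonneg_of_nonpos (by linarith) h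
    linarith
  have hknn : (0:ℚ) ≤ (k:ℚ) := by positivity
  have hD6 : (1/6 : ℚ) ≤ D := by
    rcases Nat.lt_or_ge g' 2 with hg2 | hg2
    · rcases Nat.lt_or_ge g' 1 with hg1 | hg1
      · -- g' = 0, so 4 ≤ k
        have hg0 : g' = 0 := by omega
        have hk4 : 4 ≤ k := by
          rcases hg'k with h | h
          · omega
          · exact h
        rcases Nat.lt_or_ge k 5 with hk5 | hk5
        · -- k = 4
          have hk : k = 4 := by omega
          by_cases hall : ∀ i, q i = 2
          · have hSval : S = 2 := by
              rw [hS]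
              have : ∀ i : Fin k, (1 - 1 / (q i : ℚ)) = 1/2 := by
                intro i; rw [hall i]; norm_num
              rw [Finset.sum_congr rfl (fun i _ => this i)]
              simp [hk]
              norm_num
            rw [hDdef, hSval, hg0] at hDpos
            norm_num at hDpos
          · push_neg at hall
            obtain ⟨i, hi⟩ := hall
            have hqi3 : (3:ℚ) ≤ (q i : ℚ) := by
              have := hq i
              have : 3 ≤ q i := by omega
              exact_mod_cast this
            have htermi : (2/3:ℚ) ≤ 1 - 1 / (q i : ℚ) := by
              have hp : (0:ℚ) < (q i : ℚ) := by linarith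
              have : 1 / (q i : ℚ) ≤ 1/3 := by
                rw [div_le_div_iff₀ hp (by norm_num)]; linarith
              linarith
            have hsplit : S = (1 - 1/(q i:ℚ)) +
                ∑ j ∈ Finset.univ.erase i, (1 - 1/(q j:ℚ)) := by
              rw [hS, ← Finset.sum_erase_add Finset.univ _ (Finset.mem_univ i)]
              ring
            have hcard : (Finset.univ.erase i).card = 3 := by
              rw [Finset.card_erase_of_mem (Finset.mem_univ i), Finset.card_univ]
              simp [hk]
            have hrest : (3:ℚ) * (1/2) ≤
                ∑ j ∈ Finset.univ.erase i, (1 - 1/(q j:ℚ)) := by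
              have h := Finset.card_nsmul_le_sum (Finset.univ.erase i)
                (fun j => 1 - 1/(q j:ℚ)) (1/2) (fun j _ => hterm j)
              rw [hcard, nsmul_eq_mul] at h
              exact_mod_cast h
            rw [hDdef, hg0]
            push_cast
            linarith
        · -- k ≥ 5
          have : (5:ℚ) ≤ (k:ℚ) := by exact_mod_cast hk5
          rw [hDdef, hg0]
          push_cast
          linarith
      · -- g' = 1
        have hg1' : g' = 1 := by omega
        have hDS : D = S := by rw [hDdef, hg1']; push_cast; ring
        rw [hDS]
        rw [hDS] at hDpos
        have hk1 : 1 ≤ k := by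
          by_contra h
          have hk0 : k = 0 := by omega
          subst hk0
          simp [hS] at hDpos
        have : (1:ℚ) ≤ (k:ℚ) := by exact_mod_cast hk1
        linarith
    · -- g' ≥ 2
      have : (2:ℚ) ≤ (g':ℚ) := by exact_mod_cast hg2
      rw [hDdef]
      linarith
  have hfinal : (N:ℚ) ≤ 12 * ((g:ℚ) - 1) := by
    nlinarith [mul_le_mul_of_nonneg_left hD6 (by linarith : (0:ℚ) ≤ (N:ℚ))]
  exact_mod_cast hfinal
end

section
/- Let $g \ge 2$ and $N \ge 1$ be integers, let $g' \ge 0$ and $k \ge 0$ be integers with $g' \ge 1$ or $k \ge 4$, and let $q_1 \le q_2 \le \dots \le q_k$ be integers with each $q_i \ge 2$, satisfying $2 - 2g = N\bigl(2 - 2g' - \sum_{i=1}^{k}(1 - 1/q_i)\bigr)$ as rational numbers. Then $N = 12(g-1)$ if and only if $g' = 0$, $k = 4$, and $(q_1, q_2, q_3, q_4) = (2,2,2,3)$. -/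
/-- Equality analysis for the Riemann–Hurwitz bound: under
`2 - 2g = N (2 - 2g' - ∑ (1 - 1/qᵢ))` with `g ≥ 2`, `N ≥ 1`,
`q₁ ≤ ⋯ ≤ q_k`, each `qᵢ ≥ 2`, and `g' ≥ 1` or `k ≥ 4`, the maximal order
`N = 12(g-1)` is attained exactly when `g' = 0`, `k = 4` and
`(q₁, q₂, q₃, q₄) = (2, 2, 2, 3)`. -/
theorem riemann_hurwitz_equality_case
    (g N : ℤ) (hg : 2 ≤ g) (hN : 1 ≤ N)
    (g' k : ℕ) (hg'k : 1 ≤ g' ∨ 4 ≤ k)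
    (q : Fin k → ℤ) (hq : ∀ i, 2 ≤ q i) (hmono : Monotone q)
    (hRH : (2 - 2 * g : ℚ) =
      N * (2 - 2 * g' - ∑ i, (1 - 1 / (q i : ℚ)))) :
    N = 12 * (g - 1) ↔
      g' = 0 ∧ k = 4 ∧ ∀ i : Fin k, q i = if (i : ℕ) = 3 then 3 else 2 := by
  have hq2 : ∀ i, (2:ℚ) ≤ (q i : ℚ) := fun i => by exact_mod_cast hq i
  have hqpos : ∀ i, (0:ℚ) < (q i : ℚ) := fun i => lt_of_lt_of_le two_pos (hq2 i)
  have hterm : ∀ i, (1:ℚ)/2 ≤ 1 - 1/(q i : ℚ) := by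
    intro i
    have h := one_div_le_one_div_of_le two_pos (hq2 i)
    linarith
  have hSk : (k:ℚ)/2 ≤ ∑ i, (1 - 1/(q i : ℚ)) := by
    have := Finset.sum_le_sum (s := (Finset.univ : Finset (Fin k)))
      (f := fun _ : Fin k => (1:ℚ)/2)
      (g := fun i => 1 - 1/(q i:ℚ)) (fun i _ => hterm i)
    simpa [mul_comm, div_eq_mul_inv] using this
  constructor
  · intro hNeq
    have hNQ : (N:ℚ) = 12*((g:ℚ)-1) := by exact_mod_cast hNeq
    have hgQ : (2:ℚ) ≤ (g:ℚ) := by exact_mod_cast hg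
    have hgne : ((g:ℚ)-1) ≠ 0 := by linarith
    have hE : (2 - 2*(g':ℚ) - ∑ i, (1 - 1/(q i : ℚ))) = -(1/6) := by
      have h := hRH
      rw [hNQ] at h
      have h2 : 12*((g:ℚ)-1) * ((2 - 2*(g':ℚ) - ∑ i, (1 - 1/(q i : ℚ))) + 1/6) = 0 := by
        linear_combination -h
      rcases mul_eq_zero.mp h2 with h3 | h3
      · exact absurd h3 (by intro hc; apply hgne; linarith)
      · linarith
    have hSval : ∑ i, (1 - 1/(q i : ℚ)) = 13/6 - 2*(g':ℚ) := by linarith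
    have hg'0 : g' = 0 := by
      by_contra hne
      have hg'1 : 1 ≤ g' := Nat.one_le_iff_ne_zero.mpr hne
      have hg'Q : (1:ℚ) ≤ (g':ℚ) := by exact_mod_cast hg'1
      have hk0 : k = 0 := by
        by_contra hkne
        have hk1 : 1 ≤ k := Nat.one_le_iff_ne_zero.mpr hkne
        have hk1Q : (1:ℚ) ≤ (k:ℚ) := by exact_mod_cast hk1
        linarith
      subst hk0
      simp at hSval
      have h12 : ((12 * g' : ℕ) : ℚ) = ((13 : ℕ) : ℚ) := by push_cast; linarith
      have := Nat.cast_injective h12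
      omega
    subst hg'0
    have hk4' : 4 ≤ k := hg'k.resolve_left (by norm_num)
    have hk4 : k = 4 := by
      have hkQ : (k:ℚ) < 5 := by
        simp only [Nat.cast_zero] at hSval
        linarith
      have : k < 5 := by exact_mod_cast hkQ
      omega
    subst hk4
    simp only [Nat.cast_zero] at hSval
    rw [Fin.sum_univ_four] at hSval
    have m01 : (q 0:ℚ) ≤ q 1 := by exact_mod_cast hmono (by decide : (0:Fin 4) ≤ 1)
    have m12 : (q 1:ℚ) ≤ q 2 := by exact_mod_cast hmono (by decide : (1:Fin 4) ≤ 2)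
    have m23 : (q 2:ℚ) ≤ q 3 := by exact_mod_cast hmono (by decide : (2:Fin 4) ≤ 3)
    have inv_le : ∀ (i : Fin 4) (c : ℚ), 0 < c → c ≤ (q i:ℚ) → 1/(q i:ℚ) ≤ 1/c :=
      fun i c hc h => one_div_le_one_div_of_le hc h
    have hq0 : q 0 = 2 := by
      by_contra hne
      have h3 : (3:ℚ) ≤ (q 0:ℚ) := by
        have : 3 ≤ q 0 := by have := hq 0; omega
        exact_mod_cast this
      have i0 := inv_le 0 3 (by norm_num) h3
      have i1 := inv_le 1 3 (by norm_num) (le_trans h3 m01)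
      have i2 := inv_le 2 3 (by norm_num) (le_trans h3 (le_trans m01 m12))
      have i3 := inv_le 3 3 (by norm_num) (le_trans h3 (le_trans m01 (le_trans m12 m23)))
      linarith
    have hq1 : q 1 = 2 := by
      by_contra hne
      have h3 : (3:ℚ) ≤ (q 1:ℚ) := by
        have : 3 ≤ q 1 := by have := hq 1; omega
        exact_mod_cast this
      have i0 := inv_le 0 2 (by norm_num) (hq2 0)
      have i1 := inv_le 1 3 (by norm_num) h3
      have i2 := inv_le 2 3 (by norm_num) (le_trans h3 m12)
      have i3 := inv_le 3 3 (by norm_num) (le_trans h3 (le_trans m12 m23))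
      linarith
    have hq2' : q 2 = 2 := by
      by_contra hne
      have h3 : (3:ℚ) ≤ (q 2:ℚ) := by
        have : 3 ≤ q 2 := by have := hq 2; omega
        exact_mod_cast this
      have i0 := inv_le 0 2 (by norm_num) (hq2 0)
      have i1 := inv_le 1 2 (by norm_num) (hq2 1)
      have i2 := inv_le 2 3 (by norm_num) h3
      have i3 := inv_le 3 3 (by norm_num) (le_trans h3 m23)
      linarith
    have hq3 : q 3 = 3 := by
      have e0 : (q 0:ℚ) = 2 := by exact_mod_cast hq0
      have e1 : (q 1:ℚ) = 2 := by exact_mod_cast hq1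
      have e2 : (q 2:ℚ) = 2 := by exact_mod_cast hq2'
      rw [e0, e1, e2] at hSval
      have h13 : 1/(q 3:ℚ) = 1/3 := by norm_num at hSval ⊢; linarith
      have : (q 3:ℚ) = 3 := by
        have hne3 : (q 3:ℚ) ≠ 0 := (hqpos 3).ne'
        field_simp at h13
        linarith
      exact_mod_cast this
    refine ⟨rfl, rfl, ?_⟩
    intro i
    fin_cases i <;> simp [hq0, hq1, hq2', hq3]
  · rintro ⟨hg0, hk, hqv⟩
    subst hg0; subst hk
    have h0 := hqv 0
    have h1 := hqv 1
    have h2 := hqv 2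
    have h3 := hqv 3
    rw [if_neg (by decide)] at h0 h1 h2
    rw [if_pos (by decide)] at h3
    rw [Fin.sum_univ_four, h0, h1, h2, h3] at hRH
    norm_num at hRH
    have hQ : (N:ℚ) = 12*((g:ℚ)-1) := by linarith
    exact_mod_cast hQ
end

section
/- Let $g' \ge 0$ and $k \ge 0$ be integers with $g' \ge 1$ or $k \ge 4$, and let $q_1, \dots, q_k$ be integers with each $q_i \ge 2$. Set $D = 2g' - 2 + \sum_{i=1}^{k}(1 - 1/q_i)$ (a rational number). If $D > 0$, then $D \ge 1/6$. -/
/-- The key elementary inequality: if `g' ≥ 1` or `k ≥ 4`, each `qᵢ ≥ 2`, and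
`D = 2g' - 2 + ∑ (1 - 1/qᵢ) > 0`, then `D ≥ 1/6`. -/
theorem orbifold_euler_char_gap
    (g' k : ℕ) (hg'k : 1 ≤ g' ∨ 4 ≤ k)
    (q : Fin k → ℤ) (hq : ∀ i, 2 ≤ q i)
    (hD : 0 < (2 * g' - 2 + ∑ i, (1 - 1 / (q i : ℚ)))) :
    1 / 6 ≤ (2 * g' - 2 + ∑ i, (1 - 1 / (q i : ℚ))) := by
  have hqQ : ∀ i, (2 : ℚ) ≤ (q i : ℚ) := by
    intro i; exact_mod_cast hq i
  have hpos : ∀ i, (0 : ℚ) < (q i : ℚ) := fun i => lt_of_lt_of_le two_pos (hqQ i)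
  have hhalf : ∀ i, (1/2 : ℚ) ≤ 1 - 1 / (q i : ℚ) := by
    intro i
    have : 1 / (q i : ℚ) ≤ 1/2 := by
      rw [div_le_div_iff₀ (hpos i) two_pos]
      linarith [hqQ i]
    linarith
  have hsum_ge : ∀ s : Finset (Fin k), (s.card : ℚ) * (1/2) ≤ ∑ i ∈ s, (1 - 1 / (q i : ℚ)) := by
    intro s
    calc (s.card : ℚ) * (1/2) = ∑ _i ∈ s, (1/2 : ℚ) := by
          rw [Finset.sum_const, nsmul_eq_mul]
      _ ≤ _ := Finset.sum_le_sum fun i _ => hhalf i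
  have hsum0 := hsum_ge Finset.univ
  rw [Finset.card_univ, Fintype.card_fin] at hsum0
  rcases Nat.lt_or_ge g' 1 with hg0 | hg1
  · -- g' = 0, so k ≥ 4
    have hg'0 : g' = 0 := by omega
    subst hg'0
    have hk4 : 4 ≤ k := by rcases hg'k with h | h; omega; exact h
    rcases Nat.lt_or_ge k 5 with hk5 | hk5
    · -- k = 4
      have hk : k = 4 := by omega
      subst hk
      by_cases hall : ∀ i, q i = 2
      · -- sum = 2, contradiction with hD
        have : ∑ i, (1 - 1 / (q i : ℚ)) = ∑ _i : Fin 4, (1/2 : ℚ) := by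
          apply Finset.sum_congr rfl
          intro i _
          rw [hall i]; norm_num
        rw [this] at hD
        simp [Finset.sum_const] at hD
        norm_num at hD
      · push_neg at hall
        obtain ⟨j, hj⟩ := hall
        have hj3 : (3 : ℚ) ≤ (q j : ℚ) := by
          have : 3 ≤ q j := by have := hq j; omega
          exact_mod_cast this
        have hjterm : (2/3 : ℚ) ≤ 1 - 1 / (q j : ℚ) := by
          have : 1 / (q j : ℚ) ≤ 1/3 := by
            rw [div_le_div_iff₀ (hpos j) (by norm_num : (0:ℚ) < 3)]
            linarith
          linarith
        have hsplit : ∑ i, (1 - 1 / (q i : ℚ))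
            = (1 - 1 / (q j : ℚ)) + ∑ i ∈ Finset.univ.erase j, (1 - 1 / (q i : ℚ)) :=
          (Finset.add_sum_erase _ _ (Finset.mem_univ j)).symm
        have hcard : (Finset.univ.erase j).card = 3 := by
          rw [Finset.card_erase_of_mem (Finset.mem_univ j)]
          simp
        have hrest := hsum_ge (Finset.univ.erase j)
        rw [hcard] at hrest
        rw [hsplit]
        push_cast
        push_cast at hrest
        linarith
    · -- k ≥ 5
      have : (5 : ℚ) ≤ (k : ℚ) := by exact_mod_cast hk5
      push_cast
      nlinarith [hsum0]
  · -- g' ≥ 1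
    rcases Nat.lt_or_ge g' 2 with hg2 | hg2
    · have : g' = 1 := by omega
      subst this
      -- D = sum > 0, need k ≥ 1
      rcases Nat.eq_zero_or_pos k with hk0 | hk1
      · subst hk0
        simp at hD
      · have : (1 : ℚ) ≤ (k : ℚ) := by exact_mod_cast hk1
        push_cast
        nlinarith [hsum0]
    · have : (2 : ℚ) ≤ (g' : ℚ) := by exact_mod_cast hg2
      have hnn : (0 : ℚ) ≤ ∑ i, (1 - 1 / (q i : ℚ)) := by
        nlinarith [hsum0, Nat.cast_nonneg (α := ℚ) k]
      linarith
end
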